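/- Let B be an extriangulated category with enough projectives, and let (U,V) be a rigid cotorsion pair on B (i.e. U ⊆ V). Then the heart H̲ of (U,V) has enough projectives. -/

import Mathlib

namespace ExtriHearts

open CategoryTheory CategoryTheory.Limits Opposite

attribute [local instance] CategoryTheory.Limits.hasBinaryBiproducts_of_finite_biproducts

universe v u v₂ u₂

section IdealQuotient

variable {D : Type u₂} [Category.{v₂} D] [Preadditive D]

/-- The subgroup of morphisms `X ⟶ Y` generated by those factoring through an object of `W`. -/
def wIdeal (W : Set D) (X Y : D) : AddSubgroup (X ⟶ Y) :=
  AddSubgroup.closure {f : X ⟶ Y | ∃ Z ∈ W, ∃ p : X ⟶ Z, ∃ q : Z ⟶ Y, f = p ≫ q}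

/-- The hom relation on `D` identifying morphisms whose difference lies in the ideal
generated by morphisms factoring through an object of `W`.  (For an additively closed
subcategory `W` this is the usual relation "`f - g` factors through an object of `W`".) -/
def wRel (W : Set D) : HomRel D := fun {X Y} f g => f - g ∈ wIdeal W X Y

lemma comp_left_mem_wIdeal (W : Set D) {X Y Z : D} (f : X ⟶ Y) {g : Y ⟶ Z}
    (hg : g ∈ wIdeal W Y Z) : f ≫ g ∈ wIdeal W X Z := by
  have hle : wIdeal W Y Z ≤ (wIdeal W X Z).comap (Preadditive.leftComp Z f) := by
    rw [wIdeal, AddSubgroup.closure_le]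
    rintro g ⟨Z₀, hZ₀, p, q, rfl⟩
    exact AddSubgroup.subset_closure ⟨Z₀, hZ₀, f ≫ p, q, by
      simp [Preadditive.leftComp]⟩
  simpa [Preadditive.leftComp] using hle hg

lemma comp_right_mem_wIdeal (W : Set D) {X Y Z : D} {f : X ⟶ Y} (g : Y ⟶ Z)
    (hf : f ∈ wIdeal W X Y) : f ≫ g ∈ wIdeal W X Z := by
  have hle : wIdeal W X Y ≤ (wIdeal W X Z).comap (Preadditive.rightComp X g) := by
    rw [wIdeal, AddSubgroup.closure_le]
    rintro f ⟨Z₀, hZ₀, p, q, rfl⟩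
    exact AddSubgroup.subset_closure ⟨Z₀, hZ₀, p, q ≫ g, by
      simp [Preadditive.rightComp]⟩
  simpa [Preadditive.rightComp] using hle hf

instance wRel_congruence (W : Set D) : Congruence (wRel W) where
  equivalence :=
    { refl := fun f => by
        show f - f ∈ wIdeal W _ _
        simp only [sub_self]
        exact zero_mem _
      symm := fun {f g} h => by
        have h' : f - g ∈ wIdeal W _ _ := h
        show g - f ∈ wIdeal W _ _
        simpa only [neg_sub] using neg_mem h'
      trans := fun {f g h} h₁ h₂ => by
        have h₁' : f - g ∈ wIdeal W _ _ := h₁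
        have h₂' : g - h ∈ wIdeal W _ _ := h₂
        show f - h ∈ wIdeal W _ _
        simpa only [sub_add_sub_cancel] using add_mem h₁' h₂' }
  comp_left := fun {X Y Z} f {g g'} h => by
    have h' : g - g' ∈ wIdeal W _ _ := h
    show f ≫ g - f ≫ g' ∈ wIdeal W _ _
    simpa only [← Preadditive.comp_sub] using comp_left_mem_wIdeal W f h'
  comp_right := fun {X Y Z} {f f'} g h => by
    have h' : f - f' ∈ wIdeal W _ _ := h
    show f ≫ g - f' ≫ g ∈ wIdeal W _ _
    simpa only [← Preadditive.sub_comp] using comp_right_mem_wIdeal W g h'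

/-- The quotient of a preadditive category by (the ideal generated by) the morphisms factoring
through a class of objects `W`. -/
abbrev QuotCat (W : Set D) := CategoryTheory.Quotient (wRel W)

/-- The canonical quotient functor. -/
abbrev toQuot (W : Set D) : D ⥤ QuotCat W := Quotient.functor _

instance quotCatPreadditive (W : Set D) : Preadditive (QuotCat W) :=
  Quotient.preadditive _ (fun X Y f₁ f₂ g₁ g₂ h₁ h₂ => by
    have h₁' : f₁ - f₂ ∈ wIdeal W X Y := h₁
    have h₂' : g₁ - g₂ ∈ wIdeal W X Y := h₂
    show f₁ + g₁ - (f₂ + g₂) ∈ wIdeal W X Y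
    have heq : f₁ + g₁ - (f₂ + g₂) = f₁ - f₂ + (g₁ - g₂) := by abel
    rw [heq]
    exact add_mem h₁' h₂')

end IdealQuotient

section ExtCat

/-- The data of an additive `Ab`-valued bifunctor together with a realization predicate:
`realize δ x y` means that the 3-term sequence `A --x--> X --y--> C` realizes the
`E`-extension `δ ∈ E(C,A)`, i.e. belongs to the equivalence class `s(δ)`. -/
structure PreExtStruct (B : Type u) [Category.{v} B] [Preadditive B] where
  /-- The additive bifunctor `E : Bᵒᵖ × B → Ab`. -/
  E : Bᵒᵖ ⥤ B ⥤ AddCommGrpCat.{v}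

namespace PreExtStruct

variable {B : Type u} [Category.{v} B] [Preadditive B]

/-- The abelian group `E(C,A)` of `E`-extensions of `C` by `A`. -/
abbrev Ext (σ : PreExtStruct B) (C A : B) : AddCommGrpCat.{v} := (σ.E.obj (op C)).obj A

/-- `a_* δ`, the pushforward of an `E`-extension along `a : A ⟶ A'`. -/
def push (σ : PreExtStruct B) {C A A' : B} (a : A ⟶ A') (δ : σ.Ext C A) : σ.Ext C A' :=
  (σ.E.obj (op C)).map a δ

/-- `c^* δ`, the pullback of an `E`-extension along `c : C' ⟶ C`. -/
def pull (σ : PreExtStruct B) {C' C A : B} (c : C' ⟶ C) (δ : σ.Ext C A) : σ.Ext C' A :=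
  (σ.E.map c.op).app A δ

/-- The direct sum `δ ⊕ δ'` of two `E`-extensions, i.e. the element of
`E(C ⊞ C', A ⊞ A')` corresponding to `(δ, 0, 0, δ')`. -/
noncomputable def sumExt (σ : PreExtStruct B) [HasBinaryBiproducts B] {C C' A A' : B}
    (δ : σ.Ext C A) (δ' : σ.Ext C' A') : σ.Ext (C ⊞ C') (A ⊞ A') :=
  σ.push biprod.inl (σ.pull biprod.fst δ) + σ.push biprod.inr (σ.pull biprod.snd δ')

end PreExtStruct

/-- An *extriangulated category* structure `(E, s)` on an additive category `B`, consisting of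
an additive bifunctor `E : Bᵒᵖ × B → Ab` and an additive realization `s` of `E` (encoded by the
predicate `realize`), subject to the axioms (ET1), (ET2), (ET3), (ET3)ᵒᵖ, (ET4), (ET4)ᵒᵖ of
Nakaoka–Palu. -/
structure ExtStruct (B : Type u) [Category.{v} B] [Preadditive B] [HasFiniteBiproducts B]
    extends PreExtStruct B where
  /-- (ET1) `E` is additive in the second variable. -/
  additive_fst : ∀ Cop : Bᵒᵖ, (E.obj Cop).Additive
  /-- (ET1) `E` is additive in the first variable. -/
  additive_snd : ∀ A : B, (E.flip.obj A).Additive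
  /-- `realize δ x y` means the sequence `A --x--> X --y--> C` realizes `δ`, i.e. it belongs to
  the equivalence class `s(δ)`. -/
  realize : ∀ ⦃A C : B⦄, toPreExtStruct.Ext C A → ∀ ⦃X : B⦄, (A ⟶ X) → (X ⟶ C) → Prop
  /-- Every `E`-extension is realized by some sequence. -/
  realize_ex : ∀ ⦃A C : B⦄ (δ : toPreExtStruct.Ext C A),
      ∃ (X : B) (x : A ⟶ X) (y : X ⟶ C), realize δ x y
  /-- `s(δ)` is closed under the equivalence of sequences. -/
  realize_iso : ∀ ⦃A C X X' : B⦄ (δ : toPreExtStruct.Ext C A) (x : A ⟶ X) (y : X ⟶ C)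
      (b : X ≅ X'), realize δ x y → realize δ (x ≫ b.hom) (b.inv ≫ y)
  /-- Any two realizations of `δ` are equivalent sequences. -/
  realize_unique : ∀ ⦃A C X X' : B⦄ (δ : toPreExtStruct.Ext C A) (x : A ⟶ X) (y : X ⟶ C)
      (x' : A ⟶ X') (y' : X' ⟶ C), realize δ x y → realize δ x' y' →
      ∃ b : X ≅ X', x ≫ b.hom = x' ∧ b.hom ≫ y' = y
  /-- (ET2)(∗) Any morphism of `E`-extensions is realized by a morphism of sequences. -/
  realize_map : ∀ ⦃A C A' C' X X' : B⦄ (δ : toPreExtStruct.Ext C A) (δ' : toPreExtStruct.Ext C' A')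
      (x : A ⟶ X) (y : X ⟶ C) (x' : A' ⟶ X') (y' : X' ⟶ C') (a : A ⟶ A') (c : C ⟶ C'),
      realize δ x y → realize δ' x' y' →
      toPreExtStruct.push a δ = toPreExtStruct.pull c δ' →
      ∃ b : X ⟶ X', x ≫ b = a ≫ x' ∧ y ≫ c = b ≫ y'
  /-- (ET2)(i) The split extension is realized by the split sequence. -/
  realize_zero : ∀ A C : B,
      realize (0 : toPreExtStruct.Ext C A) (biprod.inl : A ⟶ A ⊞ C) (biprod.snd : A ⊞ C ⟶ C)
  /-- (ET2)(ii) Realization is additive. -/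
  realize_sum : ∀ ⦃A C A' C' X X' : B⦄ (δ : toPreExtStruct.Ext C A)
      (δ' : toPreExtStruct.Ext C' A') (x : A ⟶ X) (y : X ⟶ C) (x' : A' ⟶ X') (y' : X' ⟶ C'),
      realize δ x y → realize δ' x' y' →
      realize (toPreExtStruct.sumExt δ δ') (biprod.map x x') (biprod.map y y')
  /-- (ET3) -/
  et3 : ∀ ⦃A C A' C' X X' : B⦄ (δ : toPreExtStruct.Ext C A) (δ' : toPreExtStruct.Ext C' A')
      (x : A ⟶ X) (y : X ⟶ C) (x' : A' ⟶ X') (y' : X' ⟶ C'),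
      realize δ x y → realize δ' x' y' → ∀ (a : A ⟶ A') (b : X ⟶ X'), x ≫ b = a ≫ x' →
      ∃ c : C ⟶ C', toPreExtStruct.push a δ = toPreExtStruct.pull c δ' ∧ y ≫ c = b ≫ y'
  /-- (ET3)ᵒᵖ -/
  et3op : ∀ ⦃A C A' C' X X' : B⦄ (δ : toPreExtStruct.Ext C A) (δ' : toPreExtStruct.Ext C' A')
      (x : A ⟶ X) (y : X ⟶ C) (x' : A' ⟶ X') (y' : X' ⟶ C'),
      realize δ x y → realize δ' x' y' → ∀ (b : X ⟶ X') (c : C ⟶ C'), y ≫ c = b ≫ y' →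
      ∃ a : A ⟶ A', toPreExtStruct.push a δ = toPreExtStruct.pull c δ' ∧ x ≫ b = a ≫ x'
  /-- (ET4) -/
  et4 : ∀ ⦃A B₀ D C F : B⦄ (δ : toPreExtStruct.Ext D A) (f : A ⟶ B₀) (f' : B₀ ⟶ D)
      (δ' : toPreExtStruct.Ext F B₀) (g : B₀ ⟶ C) (g' : C ⟶ F),
      realize δ f f' → realize δ' g g' →
      ∃ (E₀ : B) (d : D ⟶ E₀) (e : E₀ ⟶ F) (h' : C ⟶ E₀) (δ'' : toPreExtStruct.Ext E₀ A),
        g ≫ h' = f' ≫ d ∧ h' ≫ e = g' ∧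
        realize δ'' (f ≫ g) h' ∧ realize (toPreExtStruct.push f' δ') d e ∧
        toPreExtStruct.pull d δ'' = δ ∧ toPreExtStruct.push f δ'' = toPreExtStruct.pull e δ'
  /-- (ET4)ᵒᵖ -/
  et4op : ∀ ⦃F C B₀ D A : B⦄ (δ' : toPreExtStruct.Ext B₀ F) (s : F ⟶ C) (t : C ⟶ B₀)
      (δ : toPreExtStruct.Ext A D) (u : D ⟶ B₀) (v : B₀ ⟶ A),
      realize δ' s t → realize δ u v →
      ∃ (E₀ : B) (e : F ⟶ E₀) (d : E₀ ⟶ D) (m : E₀ ⟶ C) (δ'' : toPreExtStruct.Ext A E₀),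
        m ≫ t = d ≫ u ∧ e ≫ m = s ∧
        realize δ'' m (t ≫ v) ∧ realize (toPreExtStruct.pull u δ') e d ∧
        toPreExtStruct.push d δ'' = δ ∧
        toPreExtStruct.pull v δ'' = toPreExtStruct.push e δ'

namespace ExtStruct

variable {B : Type u} [Category.{v} B] [Preadditive B] [HasFiniteBiproducts B] (σ : ExtStruct B)

/-- A sequence `A --x--> X --y--> C` is a conflation if it realizes some `E`-extension. -/
def Conflation {A X C : B} (x : A ⟶ X) (y : X ⟶ C) : Prop :=
  ∃ δ : σ.Ext C A, σ.realize δ x y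

/-- `Cone(D₁, D₂)`: objects `X` admitting a conflation `D₁ ↣ D₂ ↠ X`. -/
def Cone (D₁ D₂ : Set B) : Set B :=
  {X | ∃ (A Y : B) (f : A ⟶ Y) (g : Y ⟶ X), A ∈ D₁ ∧ Y ∈ D₂ ∧ σ.Conflation f g}

/-- `CoCone(D₁, D₂)`: objects `X` admitting a conflation `X ↣ D₁ ↠ D₂`. -/
def CoCone (D₁ D₂ : Set B) : Set B :=
  {X | ∃ (Y C : B) (f : X ⟶ Y) (g : Y ⟶ C), Y ∈ D₁ ∧ C ∈ D₂ ∧ σ.Conflation f g}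

/-- `D₁ ∗ D₂`: objects `X` admitting a conflation `D₁ ↣ X ↠ D₂`. -/
def star (D₁ D₂ : Set B) : Set B :=
  {X | ∃ (A C : B) (f : A ⟶ X) (g : X ⟶ C), A ∈ D₁ ∧ C ∈ D₂ ∧ σ.Conflation f g}

/-- `add(D₁ ∗ D₂)`: direct summands of objects of `D₁ ∗ D₂`. -/
def addStar (D₁ D₂ : Set B) : Set B :=
  {X | ∃ Y ∈ σ.star D₁ D₂, ∃ (s : X ⟶ Y) (r : Y ⟶ X), s ≫ r = 𝟙 X}

/-- An object `P` is projective if `E(P, −) = 0`. -/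
def IsProj (P : B) : Prop := ∀ (A : B) (δ : σ.Ext P A), δ = 0

/-- An object `I` is injective if `E(−, I) = 0`. -/
def IsInj (I : B) : Prop := ∀ (C : B) (δ : σ.Ext C I), δ = 0

/-- The class of projective objects. -/
def projs : Set B := {P | σ.IsProj P}

/-- `B` has enough projectives: every object admits a deflation from a projective. -/
def EnoughProj : Prop :=
  ∀ X : B, ∃ (P K : B) (i : K ⟶ P) (p : P ⟶ X), σ.IsProj P ∧ σ.Conflation i p

/-- `B` has enough injectives: every object admits an inflation into an injective. -/
def EnoughInj : Prop :=
  ∀ X : B, ∃ (I C : B) (i : X ⟶ I) (p : I ⟶ C), σ.IsInj I ∧ σ.Conflation i p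

end ExtStruct

/-- A full additive subcategory (given as a class of objects), closed under isomorphisms and
direct summands. -/
structure AddClosed {B : Type u} [Category.{v} B] [Preadditive B] [HasFiniteBiproducts B]
    (U : Set B) : Prop where
  zero_mem : ∀ Z : B, IsZero Z → Z ∈ U
  biprod_mem : ∀ X Y : B, X ∈ U → Y ∈ U → (X ⊞ Y) ∈ U
  summand_mem : ∀ X Y : B, Y ∈ U → ∀ (s : X ⟶ Y) (r : Y ⟶ X), s ≫ r = 𝟙 X → X ∈ U

namespace ExtStruct

variable {B : Type u} [Category.{v} B] [Preadditive B] [HasFiniteBiproducts B] (σ : ExtStruct B)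

/-- A (complete) cotorsion pair `(U, V)` on an extriangulated category. -/
structure IsCotorsionPair (U V : Set B) : Prop where
  addU : AddClosed U
  addV : AddClosed V
  ext_vanish : ∀ ⦃X : B⦄, X ∈ U → ∀ ⦃Y : B⦄, Y ∈ V → ∀ δ : σ.Ext X Y, δ = 0
  resolve : ∀ X : B, ∃ (V₀ U₀ : B) (f : V₀ ⟶ U₀) (g : U₀ ⟶ X),
      V₀ ∈ V ∧ U₀ ∈ U ∧ σ.Conflation f g
  coresolve : ∀ X : B, ∃ (V₀ U₀ : B) (f : X ⟶ V₀) (g : V₀ ⟶ U₀),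
      V₀ ∈ V ∧ U₀ ∈ U ∧ σ.Conflation f g

/-- A twin cotorsion pair `((S,T), (U,V))`. -/
structure IsTwinCotorsionPair (S T U V : Set B) : Prop where
  fst : σ.IsCotorsionPair S T
  snd : σ.IsCotorsionPair U V
  ext_SV : ∀ ⦃X : B⦄, X ∈ S → ∀ ⦃Y : B⦄, Y ∈ V → ∀ δ : σ.Ext X Y, δ = 0

section Twin

variable (S T U V : Set B)

/-- `B⁺ = Cone(V, W)` for the core `W = T ∩ U` of a twin cotorsion pair. -/
def tPos : Set B := σ.Cone V (T ∩ U)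

/-- `B⁻ = CoCone(W, S)` for the core `W = T ∩ U` of a twin cotorsion pair. -/
def tNeg : Set B := σ.CoCone (T ∩ U) S

/-- The class of objects of the heart `H = B⁺ ∩ B⁻` of a twin cotorsion pair. -/
def tHeartSet : Set B := σ.tPos T U V ∩ σ.tNeg S T U

/-- The heart `H/W` of a twin cotorsion pair, as a full subcategory of the quotient
category `B/W`. -/
abbrev THeart := ObjectProperty.FullSubcategory (fun X : QuotCat (T ∩ U : Set B) => X.as ∈ σ.tHeartSet S T U V)


/-- A *reflection sequence* for `B₀`: a conflation `B₀ ↣ Z ↠ S₀` with `Z ∈ B⁺`, `S₀ ∈ S`,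
such that `z^* : E(Z, V₀) → E(B₀, V₀)` is surjective for every `V₀ ∈ V`. -/
def IsReflectionSeq {B₀ Z S₀ : B} (z : B₀ ⟶ Z) (w : Z ⟶ S₀) : Prop :=
  Z ∈ σ.tPos T U V ∧ S₀ ∈ S ∧ σ.Conflation z w ∧
    ∀ ⦃V₀ : B⦄, V₀ ∈ V → Function.Surjective (fun δ : σ.Ext Z V₀ => σ.pull z δ)

/-- A *coreflection sequence* for `B₀`: a conflation `V₀ ↣ X ↠ B₀` with `X ∈ B⁻`, `V₀ ∈ V`,
such that `x_* : E(S₀, X) → E(S₀, B₀)` is surjective for every `S₀ ∈ S`. -/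
def IsCoreflectionSeq {V₀ X B₀ : B} (v : V₀ ⟶ X) (x : X ⟶ B₀) : Prop :=
  X ∈ σ.tNeg S T U ∧ V₀ ∈ V ∧ σ.Conflation v x ∧
    ∀ ⦃S₀ : B⦄, S₀ ∈ S → Function.Surjective (fun δ : σ.Ext S₀ X => σ.push x δ)

end Twin

section Single

variable (U V : Set B)

/-- `B⁺` for a single cotorsion pair `(U,V)`, with core `W = U ∩ V`. -/
def sPos : Set B := σ.Cone V (U ∩ V)

/-- `B⁻` for a single cotorsion pair `(U,V)`, with core `W = U ∩ V`. -/
def sNeg : Set B := σ.CoCone (U ∩ V) U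

/-- The class of objects of the heart of a single cotorsion pair. -/
def sHeartSet : Set B := σ.sPos U V ∩ σ.sNeg U V

/-- The heart `H/W` of a cotorsion pair `(U,V)`, a full subcategory of `B/W`, `W = U ∩ V`. -/
abbrev SHeart := ObjectProperty.FullSubcategory (fun X : QuotCat (U ∩ V : Set B) => X.as ∈ σ.sHeartSet U V)

/-- The inclusion of the heart into the quotient category `B/W`. -/
abbrev sHeartIncl : σ.SHeart U V ⥤ QuotCat (U ∩ V : Set B) := ObjectProperty.ι _

/-- The kernel `K = add(U ∗ V)` of a cotorsion pair. -/
def kernelSet : Set B := σ.addStar U V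

/-- The coheart `C = ⊥₁K` of a cotorsion pair. -/
def coheart : Set B := {X | ∀ ⦃K : B⦄, K ∈ σ.kernelSet U V → ∀ δ : σ.Ext X K, δ = 0}


/-- An object of the heart determined by an object of `B` lying in `B⁺ ∩ B⁻`. -/
def sHeartObj {X : B} (hX : X ∈ σ.sHeartSet U V) : σ.SHeart U V :=
  ⟨(toQuot (U ∩ V : Set B)).obj X, hX⟩

/-- The image in the heart of a morphism of `B` between objects of `B⁺ ∩ B⁻`. -/
def sHeartHom {X Y : B} (hX : X ∈ σ.sHeartSet U V) (hY : Y ∈ σ.sHeartSet U V) (f : X ⟶ Y) :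
    σ.sHeartObj U V hX ⟶ σ.sHeartObj U V hY :=
  ObjectProperty.homMk ((toQuot (U ∩ V : Set B)).map f)

end Single

end ExtStruct

end ExtCat

section More

variable {B : Type u} [Category.{v} B] [Preadditive B] [HasFiniteBiproducts B]

namespace ExtStruct

variable (σ : ExtStruct B)

/-- `Ω D₀ = CoCone(P, D₀)`, the syzygy class of a class of objects `D₀`. -/
def omegaSet (D₀ : Set B) : Set B := σ.CoCone σ.projs D₀

/-- A choice of iterated syzygies of `X`: `Z 0 = X` and for each `i` there is a conflation
`Z (i+1) ↣ P ↠ Z i` with `P` projective. -/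
def SyzygyChain (X : B) (Z : ℕ → B) : Prop :=
  Z 0 = X ∧ ∀ i : ℕ, ∃ (P : B) (f : Z (i + 1) ⟶ P) (g : P ⟶ Z i),
    σ.IsProj P ∧ σ.Conflation f g

/-- A choice of iterated cosyzygies of `Y`: `Z 0 = Y` and for each `i` there is a conflation
`Z i ↣ I ↠ Z (i+1)` with `I` injective. -/
def CosyzygyChain (Y : B) (Z : ℕ → B) : Prop :=
  Z 0 = Y ∧ ∀ i : ℕ, ∃ (I : B) (f : Z i ⟶ I) (g : I ⟶ Z (i + 1)),
    σ.IsInj I ∧ σ.Conflation f g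

/-- Vanishing of the higher extension group `E^{i+1}(X, Y) = E(X, Σ^i Y)`, expressed via
cosyzygy chains.  (`hExtVanish σ X Y 0` is the vanishing of `E(X,Y)` itself.) -/
def hExtVanish (X Y : B) (i : ℕ) : Prop :=
  ∀ Z : ℕ → B, σ.CosyzygyChain Y Z → ∀ δ : σ.Ext X (Z i), δ = 0

/-- `Σ^j D₀`: the class of `j`-th cosyzygies of objects of `D₀`. -/
def sigmaSet (j : ℕ) (D₀ : Set B) : Set B :=
  {X | ∃ Y ∈ D₀, ∃ Z : ℕ → B, σ.CosyzygyChain Y Z ∧ Z j = X}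

/-- An `n`-cluster tilting subcategory of an extriangulated category:
it is functorially finite, and `X ∈ M` iff `E^i(X, M) = 0` for `1 ≤ i ≤ n - 1`,
iff `E^i(M, X) = 0` for `1 ≤ i ≤ n - 1`. -/
structure IsNClusterTilting (n : ℕ) (M : Set B) : Prop where
  contravariantly_finite : ∀ X : B, ∃ M₀ ∈ M, ∃ f : M₀ ⟶ X,
      ∀ M₁ ∈ M, ∀ g : M₁ ⟶ X, ∃ h : M₁ ⟶ M₀, h ≫ f = g
  covariantly_finite : ∀ X : B, ∃ M₀ ∈ M, ∃ f : X ⟶ M₀,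
      ∀ M₁ ∈ M, ∀ g : X ⟶ M₁, ∃ h : M₀ ⟶ M₁, f ≫ h = g
  mem_iff_vanish_left : ∀ X : B,
      X ∈ M ↔ ∀ i : ℕ, i ≤ n - 2 → ∀ Y ∈ M, σ.hExtVanish X Y i
  mem_iff_vanish_right : ∀ X : B,
      X ∈ M ↔ ∀ i : ℕ, i ≤ n - 2 → ∀ Y ∈ M, σ.hExtVanish Y X i

/-- `mlev σ M k` is the subcategory `M_{k+1}` of the paper: `M_1 = M` and
`M_{ℓ} = Cone(M_{ℓ-1}, M)`. -/
def mlev (M : Set B) : ℕ → Set B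
  | 0 => M
  | (k + 1) => σ.Cone (mlev M k) M

end ExtStruct

section Reflectors

variable (W P N : Set B)

/-- The data of a reflection functor `σ⁺` onto the objects of `B⁺` (given by the class `P`),
i.e. a left adjoint of the inclusion of the full subcategory of `B/W` on `P` in the bijection
formulation: composing with the unit `B → σ⁺B` gives bijections
`(σ⁺X ⟶ Y) ≃ (X ⟶ Y)` for all `Y` lying in `P`. -/
structure ReflectorData where
  σp : QuotCat W ⥤ QuotCat W
  mem : ∀ X : QuotCat W, (σp.obj X).as ∈ P
  unit : 𝟭 (QuotCat W) ⟶ σp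
  bij : ∀ (X Y : QuotCat W), Y.as ∈ P →
      Function.Bijective (fun g : (σp.obj X ⟶ Y) => unit.app X ≫ g)

/-- The data of a coreflection functor `σ⁻` onto the objects of `B⁻` (given by the class `N`). -/
structure CoreflectorData where
  σm : QuotCat W ⥤ QuotCat W
  mem : ∀ X : QuotCat W, (σm.obj X).as ∈ N
  counit : σm ⟶ 𝟭 (QuotCat W)
  bij : ∀ (X Y : QuotCat W), X.as ∈ N →
      Function.Bijective (fun g : (X ⟶ σm.obj Y) => g ≫ counit.app Y)

end Reflectors

namespace ExtStruct

variable (σ : ExtStruct B)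

/-- The data of the cohomological functor `H = σ⁻ ∘ σ⁺ ∘ π : B → H` associated to a cotorsion
pair `(U, V)`: reflection and coreflection functors together with a functor `H` to the heart
which is isomorphic to `σ⁻ ∘ σ⁺ ∘ π` after composition with the inclusion of the heart. -/
structure HeartFunctorData (U V : Set B) where
  refl : ReflectorData (B := B) (U ∩ V) (σ.sPos U V)
  corefl : CoreflectorData (B := B) (U ∩ V) (σ.sNeg U V)
  H : B ⥤ σ.SHeart U V
  iso : (H ⋙ σ.sHeartIncl U V) ≅ (toQuot (U ∩ V : Set B) ⋙ refl.σp ⋙ corefl.σm)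

end ExtStruct

section Mod

variable (D : Type u₂) [Category.{v₂} D] [Preadditive D]

/-- A coherent (finitely presented) functor `Dᵒᵖ ⥤ Ab`: one admitting an exact presentation
`Hom(−,X) → Hom(−,Y) → F → 0`. -/
def IsCoherent (F : Dᵒᵖ ⥤ AddCommGrpCat.{v₂}) : Prop :=
  ∃ (X Y : D) (f : X ⟶ Y) (η : preadditiveYoneda.obj Y ⟶ F),
    (∀ A : D, Function.Surjective (η.app (op A))) ∧
    (∀ (A : D) (g : A ⟶ Y), η.app (op A) g = 0 ↔ ∃ h : A ⟶ X, h ≫ f = g)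

/-- `mod D`: the category of coherent functors `Dᵒᵖ ⥤ Ab`. -/
abbrev ModCat := ObjectProperty.FullSubcategory (fun F : Dᵒᵖ ⥤ AddCommGrpCat.{v₂} => IsCoherent D F)

end Mod

/-- The additive quotient `C/P` of the full subcategory of `B` on a class `C₀` of objects by
(the ideal of) morphisms factoring through objects satisfying `P₀`. -/
abbrev StableCat (C₀ P₀ : Set B) :=
  QuotCat (D := ObjectProperty.FullSubcategory (fun X : B => X ∈ C₀)) {Z | Z.obj ∈ P₀}

end More


/-! ### Auxiliary lemmas for Statement 16 -/

section Aux16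

open ZeroObject

set_option linter.unusedSectionVars false

namespace PreExtStruct

variable {B : Type u} [Category.{v} B] [Preadditive B] (σ : PreExtStruct B)

lemma push_push' {C A A' A'' : B} (a : A ⟶ A') (b : A' ⟶ A'') (δ : σ.Ext C A) :
    σ.push b (σ.push a δ) = σ.push (a ≫ b) δ := by
  show ((σ.E.obj (op C)).map b) (((σ.E.obj (op C)).map a) δ) = ((σ.E.obj (op C)).map (a ≫ b)) δ
  rw [Functor.map_comp]
  rfl

lemma push_id' {C A : B} (δ : σ.Ext C A) : σ.push (𝟙 A) δ = δ := by
  show ((σ.E.obj (op C)).map (𝟙 A)) δ = δ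
  rw [CategoryTheory.Functor.map_id]
  rfl

lemma pull_pull' {C'' C' C A : B} (c' : C'' ⟶ C') (c : C' ⟶ C) (δ : σ.Ext C A) :
    σ.pull c' (σ.pull c δ) = σ.pull (c' ≫ c) δ := by
  show ((σ.E.map c.op) ≫ (σ.E.map c'.op)).app A δ = _
  rw [← Functor.map_comp, ← op_comp]
  rfl

lemma pull_id' {C A : B} (δ : σ.Ext C A) : σ.pull (𝟙 C) δ = δ := by
  show (σ.E.map (𝟙 (op C))).app A δ = δ
  rw [CategoryTheory.Functor.map_id]
  rfl

lemma push_pull' {C' C A A' : B} (c : C' ⟶ C) (a : A ⟶ A') (δ : σ.Ext C A) :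
    σ.push a (σ.pull c δ) = σ.pull c (σ.push a δ) := by
  have h := (σ.E.map c.op).naturality a
  exact (congrArg (fun (t : σ.Ext C A ⟶ σ.Ext C' A') => t δ) h).symm

lemma push_zero' {C A A' : B} (a : A ⟶ A') : σ.push a (0 : σ.Ext C A) = 0 :=
  map_zero _

lemma pull_zero' {C' C A : B} (c : C' ⟶ C) : σ.pull c (0 : σ.Ext C A) = 0 :=
  map_zero _

end PreExtStruct

section WFactor

variable {D : Type u₂} [Category.{v₂} D] [Preadditive D] [HasFiniteBiproducts D]

lemma mem_wIdeal_of_factor {W : Set D} {X Y Z : D} (hZ : Z ∈ W) (p : X ⟶ Z) (q : Z ⟶ Y) :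
    p ≫ q ∈ wIdeal W X Y :=
  AddSubgroup.subset_closure ⟨Z, hZ, p, q, rfl⟩

lemma mem_wIdeal_iff {W : Set D} (hW : AddClosed W) {X Y : D} (f : X ⟶ Y) :
    f ∈ wIdeal W X Y ↔ ∃ Z ∈ W, ∃ p : X ⟶ Z, ∃ q : Z ⟶ Y, f = p ≫ q := by
  constructor
  · intro hf
    let S : AddSubgroup (X ⟶ Y) :=
      { carrier := {f | ∃ Z ∈ W, ∃ p : X ⟶ Z, ∃ q : Z ⟶ Y, f = p ≫ q}
        zero_mem' := ⟨0, hW.zero_mem _ (isZero_zero D), 0, 0, by simp⟩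
        add_mem' := by
          rintro f g ⟨Z₁, h₁, p₁, q₁, rfl⟩ ⟨Z₂, h₂, p₂, q₂, rfl⟩
          exact ⟨Z₁ ⊞ Z₂, hW.biprod_mem _ _ h₁ h₂, biprod.lift p₁ p₂, biprod.desc q₁ q₂,
            by rw [biprod.lift_desc]⟩
        neg_mem' := by
          rintro f ⟨Z₁, h₁, p₁, q₁, rfl⟩
          exact ⟨Z₁, h₁, -p₁, q₁, by simp⟩ }
    have hle : wIdeal W X Y ≤ S := by
      rw [wIdeal, AddSubgroup.closure_le]
      rintro f ⟨Z₁, h₁, p₁, q₁, rfl⟩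
      exact ⟨Z₁, h₁, p₁, q₁, rfl⟩
    exact hle hf
  · rintro ⟨Z₁, h₁, p₁, q₁, rfl⟩
    exact mem_wIdeal_of_factor h₁ p₁ q₁

lemma toQuot_map_eq_iff (W : Set D) {X Y : D} (f g : X ⟶ Y) :
    (toQuot W).map f = (toQuot W).map g ↔ f - g ∈ wIdeal W X Y :=
  Quotient.functor_map_eq_iff (wRel W) f g

lemma toQuot_map_zero (W : Set D) (X Y : D) :
    (toQuot W).map (0 : X ⟶ Y) = 0 := rfl

lemma toQuot_map_eq_zero_iff (W : Set D) {X Y : D} (f : X ⟶ Y) :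
    (toQuot W).map f = 0 ↔ f ∈ wIdeal W X Y := by
  rw [← toQuot_map_zero W X Y, toQuot_map_eq_iff, sub_zero]

end WFactor


namespace ExtStruct

variable {B : Type u} [Category.{v} B] [Preadditive B] [HasFiniteBiproducts B] (σ : ExtStruct B)

open PreExtStruct

lemma realize_zero_left {Z Q : B} (hZ : IsZero Z) (t : Z ⟶ Q) :
    σ.realize (0 : σ.Ext Q Z) t (𝟙 Q) := by
  have h := σ.realize_zero Z Q
  have hinl : (biprod.inl : Z ⟶ Z ⊞ Q) = 0 := hZ.eq_of_src _ _
  have htot : (biprod.snd : Z ⊞ Q ⟶ Q) ≫ biprod.inr = 𝟙 (Z ⊞ Q) := by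
    have h2 := biprod.total (X := Z) (Y := Q)
    rwa [hinl, comp_zero, zero_add] at h2
  have h3 := σ.realize_iso _ _ _ (⟨biprod.snd, biprod.inr, htot, biprod.inr_snd⟩ : Z ⊞ Q ≅ Q) h
  have e1 : (biprod.inl : Z ⟶ Z ⊞ Q) ≫ biprod.snd = t := hZ.eq_of_src _ _
  have e2 : (biprod.inr : Q ⟶ Z ⊞ Q) ≫ (biprod.snd : Z ⊞ Q ⟶ Q) = 𝟙 Q := biprod.inr_snd
  rwa [e1, e2] at h3

lemma realize_zero_right {Z Q : B} (hZ : IsZero Z) (t : Q ⟶ Z) :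
    σ.realize (0 : σ.Ext Z Q) (𝟙 Q) t := by
  have h := σ.realize_zero Q Z
  have hinr : (biprod.inr : Z ⟶ Q ⊞ Z) = 0 := hZ.eq_of_src _ _
  have htot : (biprod.fst : Q ⊞ Z ⟶ Q) ≫ biprod.inl = 𝟙 (Q ⊞ Z) := by
    have h2 := biprod.total (X := Q) (Y := Z)
    rwa [hinr, comp_zero, add_zero] at h2
  have h3 := σ.realize_iso _ _ _ (⟨biprod.fst, biprod.inl, htot, biprod.inl_fst⟩ : Q ⊞ Z ≅ Q) h
  have e1 : (biprod.inl : Q ⟶ Q ⊞ Z) ≫ biprod.fst = 𝟙 Q := biprod.inl_fst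
  have e2 : (biprod.inl : Q ⟶ Q ⊞ Z) ≫ (biprod.snd : Q ⊞ Z ⟶ Z) = t := hZ.eq_of_tgt _ _
  rwa [e1, e2] at h3

/-- If `s : K ⟶ T` has vanishing pushforward of `θ`, it extends over the inflation `i`. -/
lemma extend_of_push_zero {K P U₀ T : B} {θ : σ.Ext U₀ K} {i : K ⟶ P} {p : P ⟶ U₀}
    (hθ : σ.realize θ i p) (s : K ⟶ T) (hs : σ.push s θ = 0) :
    ∃ s' : P ⟶ T, i ≫ s' = s := by
  obtain ⟨b, hb1, _⟩ := σ.realize_map θ (0 : σ.Ext U₀ T) i p biprod.inl biprod.snd s (𝟙 U₀)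
    hθ (σ.realize_zero T U₀) (by rw [hs, σ.toPreExtStruct.pull_zero'])
  exact ⟨b ≫ biprod.fst, by rw [← Category.assoc, hb1, Category.assoc, biprod.inl_fst, Category.comp_id]⟩

/-- If `c : T ⟶ C` has vanishing pullback of `δ`, it factors through the deflation `y`. -/
lemma factor_of_pull_zero {A X C T : B} {δ : σ.Ext C A} {x : A ⟶ X} {y : X ⟶ C}
    (hδ : σ.realize δ x y) (c : T ⟶ C) (hc : σ.pull c δ = 0) :
    ∃ b : T ⟶ X, b ≫ y = c := by
  obtain ⟨b, _, hb2⟩ := σ.realize_map (0 : σ.Ext T A) δ biprod.inl biprod.snd x y (𝟙 A) c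
    (σ.realize_zero A T) hδ (by rw [σ.toPreExtStruct.push_id', hc])
  exact ⟨biprod.inr ≫ b, by rw [Category.assoc, ← hb2, biprod.inr_snd_assoc]⟩

lemma weak_kernel {A X C T : B} {δ : σ.Ext C A} {x : A ⟶ X} {y : X ⟶ C}
    (hδ : σ.realize δ x y) (t : T ⟶ X) (ht : t ≫ y = 0) :
    ∃ ψ : T ⟶ A, ψ ≫ x = t := by
  have h1 : σ.realize (0 : σ.Ext (0 : B) T) (𝟙 T) (0 : T ⟶ (0 : B)) :=
    σ.realize_zero_right (isZero_zero B) 0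
  obtain ⟨a, _, ha⟩ := σ.et3op (0 : σ.Ext (0 : B) T) δ (𝟙 T) (0 : T ⟶ (0 : B)) x y h1 hδ
    t (0 : (0 : B) ⟶ C) (by rw [ht, zero_comp])
  exact ⟨a, by simpa using ha.symm⟩

lemma weak_cokernel {A X C T : B} {δ : σ.Ext C A} {x : A ⟶ X} {y : X ⟶ C}
    (hδ : σ.realize δ x y) (n : X ⟶ T) (hn : x ≫ n = 0) :
    ∃ k : C ⟶ T, y ≫ k = n := by
  have h1 : σ.realize (0 : σ.Ext T (0 : B)) (0 : (0 : B) ⟶ T) (𝟙 T) :=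
    σ.realize_zero_left (isZero_zero B) 0
  obtain ⟨k, _, hk⟩ := σ.et3 δ (0 : σ.Ext T (0 : B)) x y (0 : (0 : B) ⟶ T) (𝟙 T) hδ h1
    (0 : A ⟶ (0 : B)) n (by rw [hn, zero_comp])
  exact ⟨k, by simpa using hk⟩

lemma isIso_endo {A X C : B} {δ : σ.Ext C A} {x : A ⟶ X} {y : X ⟶ C}
    (hδ : σ.realize δ x y) (v : X ⟶ X) (hv1 : x ≫ v = x) (hv2 : v ≫ y = y) :
    IsIso v := by
  obtain ⟨n, rfl⟩ : ∃ n, v = 𝟙 X + n := ⟨v - 𝟙 X, by abel⟩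
  have h1 : x ≫ n = 0 := by
    have := hv1
    simp only [Preadditive.comp_add, Category.comp_id] at this
    rwa [add_eq_left] at this
  have h2 : n ≫ y = 0 := by
    have := hv2
    simp only [Preadditive.add_comp, Category.id_comp] at this
    rwa [add_eq_left] at this
  obtain ⟨k, hk⟩ := σ.weak_cokernel hδ n h1
  have hnn : n ≫ n = 0 := by
    calc n ≫ n = n ≫ (y ≫ k) := by rw [hk]
    _ = (n ≫ y) ≫ k := by rw [Category.assoc]
    _ = 0 := by rw [h2, zero_comp]
  refine ⟨⟨𝟙 X - n, ?_, ?_⟩⟩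
  · simp only [Preadditive.add_comp, Preadditive.comp_sub, Category.id_comp,
      Category.comp_id, hnn]
    abel
  · simp only [Preadditive.sub_comp, Preadditive.comp_add, Category.id_comp,
      Category.comp_id, hnn]
    abel

lemma isIso_of_comp_both {X Y : B} (f : X ⟶ Y) (g : Y ⟶ X)
    (h1 : IsIso (f ≫ g)) (h2 : IsIso (g ≫ f)) : IsIso f := by
  have key : inv (f ≫ g) ≫ f = f ≫ inv (g ≫ f) := by
    rw [IsIso.inv_comp_eq]
    rw [Category.assoc, ← Category.assoc g f, IsIso.hom_inv_id, Category.comp_id]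
  refine ⟨⟨g ≫ inv (f ≫ g), ?_, ?_⟩⟩
  · rw [← Category.assoc]
    exact IsIso.hom_inv_id _
  · rw [Category.assoc, key, ← Category.assoc]
    exact IsIso.hom_inv_id _

lemma realize_iso_left {A A' X C : B} {δ : σ.Ext C A} {x : A ⟶ X} {y : X ⟶ C}
    (hr : σ.realize δ x y) (e : A ≅ A') :
    σ.realize (σ.push e.hom δ) (e.inv ≫ x) y := by
  obtain ⟨X₁, x₁, y₁, h₁⟩ := σ.realize_ex (σ.push e.hom δ)
  obtain ⟨b₁, hb₁, hb₁'⟩ := σ.realize_map δ (σ.push e.hom δ) x y x₁ y₁ e.hom (𝟙 C)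
    hr h₁ (σ.toPreExtStruct.pull_id' _).symm
  obtain ⟨b₂, hb₂, hb₂'⟩ := σ.realize_map (σ.push e.hom δ) δ x₁ y₁ x y e.inv (𝟙 C)
    h₁ hr (by rw [σ.toPreExtStruct.push_push', e.hom_inv_id, σ.toPreExtStruct.push_id',
      σ.toPreExtStruct.pull_id'])
  rw [Category.comp_id] at hb₁' hb₂'
  -- hb₁ : x ≫ b₁ = e.hom ≫ x₁ ; hb₁' : y = b₁ ≫ y₁
  -- hb₂ : x₁ ≫ b₂ = e.inv ≫ x ; hb₂' : y₁ = b₂ ≫ y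
  have hv1 : x₁ ≫ (b₂ ≫ b₁) = x₁ := by
    rw [← Category.assoc, hb₂, Category.assoc, hb₁, ← Category.assoc, e.inv_hom_id,
      Category.id_comp]
  have hv2 : (b₂ ≫ b₁) ≫ y₁ = y₁ := by
    rw [Category.assoc, ← hb₁', hb₂']
  have hu1 : x ≫ (b₁ ≫ b₂) = x := by
    rw [← Category.assoc, hb₁, Category.assoc, hb₂, ← Category.assoc, e.hom_inv_id,
      Category.id_comp]
  have hu2 : (b₁ ≫ b₂) ≫ y = y := by
    rw [Category.assoc, ← hb₂', hb₁']
  have hi1 : IsIso (b₂ ≫ b₁) := σ.isIso_endo h₁ _ hv1 hv2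
  have hi2 : IsIso (b₁ ≫ b₂) := σ.isIso_endo hr _ hu1 hu2
  have hb₂iso : IsIso b₂ := isIso_of_comp_both b₂ b₁ hi1 hi2
  have hfin := σ.realize_iso (σ.push e.hom δ) x₁ y₁ (asIso b₂) h₁
  have e2 : (asIso b₂).inv ≫ y₁ = y := by
    rw [hb₂']
    exact IsIso.inv_hom_id_assoc _ _
  rwa [show (asIso b₂).hom = b₂ from rfl, hb₂, e2] at hfin

lemma realize_iso_right {A X C C' : B} {δ : σ.Ext C A} {x : A ⟶ X} {y : X ⟶ C}
    (hr : σ.realize δ x y) (e : C ≅ C') :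
    σ.realize (σ.pull e.inv δ) x (y ≫ e.hom) := by
  obtain ⟨X₁, x₁, y₁, h₁⟩ := σ.realize_ex (σ.pull e.inv δ)
  obtain ⟨b₂, hb₂, hb₂'⟩ := σ.realize_map (σ.pull e.inv δ) δ x₁ y₁ x y (𝟙 A) e.inv
    h₁ hr (σ.toPreExtStruct.push_id' _)
  obtain ⟨b₁, hb₁, hb₁'⟩ := σ.realize_map δ (σ.pull e.inv δ) x y x₁ y₁ (𝟙 A) e.hom
    hr h₁ (by rw [σ.toPreExtStruct.push_id', σ.toPreExtStruct.pull_pull', e.hom_inv_id,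
      σ.toPreExtStruct.pull_id'])
  rw [Category.id_comp] at hb₁ hb₂
  -- hb₂ : x₁ ≫ b₂ = x ; hb₂' : y₁ ≫ e.inv = b₂ ≫ y
  -- hb₁ : x ≫ b₁ = x₁ ; hb₁' : y ≫ e.hom = b₁ ≫ y₁
  have hv1 : x₁ ≫ (b₂ ≫ b₁) = x₁ := by rw [← Category.assoc, hb₂, hb₁]
  have hv2 : (b₂ ≫ b₁) ≫ y₁ = y₁ := by
    rw [Category.assoc, ← hb₁', ← Category.assoc, ← hb₂', Category.assoc, e.inv_hom_id,
      Category.comp_id]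
  have hu1 : x ≫ (b₁ ≫ b₂) = x := by rw [← Category.assoc, hb₁, hb₂]
  have hu2 : (b₁ ≫ b₂) ≫ y = y := by
    rw [Category.assoc, ← hb₂', ← Category.assoc, ← hb₁', Category.assoc, e.hom_inv_id,
      Category.comp_id]
  have hi1 : IsIso (b₂ ≫ b₁) := σ.isIso_endo h₁ _ hv1 hv2
  have hi2 : IsIso (b₁ ≫ b₂) := σ.isIso_endo hr _ hu1 hu2
  have hb₂iso : IsIso b₂ := isIso_of_comp_both b₂ b₁ hi1 hi2
  have hfin := σ.realize_iso (σ.pull e.inv δ) x₁ y₁ (asIso b₂) h₁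
  have e2 : (asIso b₂).inv ≫ y₁ = y ≫ e.hom := by
    show inv b₂ ≫ y₁ = y ≫ e.hom
    rw [IsIso.inv_comp_eq]
    rw [← Category.assoc, ← hb₂', Category.assoc, e.inv_hom_id, Category.comp_id]
  rwa [show (asIso b₂).hom = b₂ from rfl, hb₂, e2] at hfin

lemma split_of_realize_zero {A X C : B} {x : A ⟶ X} {y : X ⟶ C}
    (hr : σ.realize (0 : σ.Ext C A) x y) :
    (∃ r : X ⟶ A, x ≫ r = 𝟙 A) ∧ (∃ s : C ⟶ X, s ≫ y = 𝟙 C) := by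
  obtain ⟨b, hb1, hb2⟩ := σ.realize_unique (0 : σ.Ext C A) x y biprod.inl biprod.snd hr
    (σ.realize_zero A C)
  constructor
  · exact ⟨b.hom ≫ biprod.fst, by rw [← Category.assoc, hb1, biprod.inl_fst]⟩
  · refine ⟨biprod.inr ≫ b.inv, ?_⟩
    rw [Category.assoc, ← hb2, Iso.inv_hom_id_assoc, biprod.inr_snd]

lemma sumExt_zero_right {A C Q : B} (δ : σ.Ext C A) :
    σ.toPreExtStruct.sumExt δ (0 : σ.Ext Q (0 : B))
      = σ.push (biprod.inl : A ⟶ A ⊞ (0 : B)) (σ.pull (biprod.fst : C ⊞ Q ⟶ C) δ) := by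
  rw [PreExtStruct.sumExt, σ.toPreExtStruct.pull_zero', σ.toPreExtStruct.push_zero', add_zero]

lemma sumExt_zero_left {A C Q : B} (δ : σ.Ext C A) :
    σ.toPreExtStruct.sumExt δ (0 : σ.Ext (0 : B) Q)
      = σ.push (biprod.inl : A ⟶ A ⊞ Q) (σ.pull (biprod.fst : C ⊞ (0 : B) ⟶ C) δ) := by
  rw [PreExtStruct.sumExt, σ.toPreExtStruct.pull_zero', σ.toPreExtStruct.push_zero', add_zero]

/-- Direct sum of a conflation with the identity of `Q`, on the right. -/
lemma realize_sum_id_right {A X C : B} {δ : σ.Ext C A} {x : A ⟶ X} {y : X ⟶ C}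
    (hr : σ.realize δ x y) (Q : B) :
    σ.realize (σ.pull (biprod.fst : C ⊞ Q ⟶ C) δ) (x ≫ biprod.inl)
      (biprod.map y (𝟙 Q)) := by
  have h0 : σ.realize (0 : σ.Ext Q (0 : B)) (0 : (0 : B) ⟶ Q) (𝟙 Q) :=
    σ.realize_zero_left (isZero_zero B) 0
  have hs := σ.realize_sum δ (0 : σ.Ext Q (0 : B)) x y 0 (𝟙 Q) hr h0
  have hinr : (biprod.inr : (0 : B) ⟶ A ⊞ (0 : B)) = 0 := (isZero_zero B).eq_of_src _ _
  have htot : (biprod.fst : A ⊞ (0 : B) ⟶ A) ≫ biprod.inl = 𝟙 (A ⊞ (0 : B)) := by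
    have h2 := biprod.total (X := A) (Y := (0 : B))
    rwa [hinr, comp_zero, add_zero] at h2
  have h2 := σ.realize_iso_left hs (⟨biprod.fst, biprod.inl, htot, biprod.inl_fst⟩ : A ⊞ (0 : B) ≅ A)
  have e1 : (biprod.inl : A ⟶ A ⊞ (0 : B)) ≫ biprod.map x (0 : (0 : B) ⟶ Q) = x ≫ biprod.inl :=
    biprod.inl_map _ _
  have e2 : σ.push (biprod.fst : A ⊞ (0 : B) ⟶ A) (σ.toPreExtStruct.sumExt δ (0 : σ.Ext Q (0 : B)))
      = σ.pull (biprod.fst : C ⊞ Q ⟶ C) δ := by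
    rw [sumExt_zero_right, σ.toPreExtStruct.push_push', biprod.inl_fst, σ.toPreExtStruct.push_id']
  rwa [show (⟨biprod.fst, biprod.inl, htot, biprod.inl_fst⟩ : A ⊞ (0 : B) ≅ A).hom = biprod.fst
      from rfl,
    show (⟨biprod.fst, biprod.inl, htot, biprod.inl_fst⟩ : A ⊞ (0 : B) ≅ A).inv = biprod.inl
      from rfl, e1, e2] at h2

/-- Direct sum of a conflation with the identity of `Q`, on the left of the deflation side. -/
lemma realize_sum_id_left {A X C : B} {δ : σ.Ext C A} {x : A ⟶ X} {y : X ⟶ C}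
    (hr : σ.realize δ x y) (Q : B) :
    σ.realize (σ.push (biprod.inl : A ⟶ A ⊞ Q) δ) (biprod.map x (𝟙 Q))
      (biprod.fst ≫ y : X ⊞ Q ⟶ C) := by
  have h0 : σ.realize (0 : σ.Ext (0 : B) Q) (𝟙 Q) (0 : Q ⟶ (0 : B)) :=
    σ.realize_zero_right (isZero_zero B) 0
  have hs := σ.realize_sum δ (0 : σ.Ext (0 : B) Q) x y (𝟙 Q) 0 hr h0
  have hinr : (biprod.inr : (0 : B) ⟶ C ⊞ (0 : B)) = 0 := (isZero_zero B).eq_of_src _ _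
  have htot : (biprod.fst : C ⊞ (0 : B) ⟶ C) ≫ biprod.inl = 𝟙 (C ⊞ (0 : B)) := by
    have h2 := biprod.total (X := C) (Y := (0 : B))
    rwa [hinr, comp_zero, add_zero] at h2
  have h2 := σ.realize_iso_right hs
    (⟨biprod.fst, biprod.inl, htot, biprod.inl_fst⟩ : C ⊞ (0 : B) ≅ C)
  have e1 : biprod.map y (0 : Q ⟶ (0 : B)) ≫ (biprod.fst : C ⊞ (0 : B) ⟶ C)
      = (biprod.fst ≫ y : X ⊞ Q ⟶ C) := by
    apply biprod.hom_ext' <;> simp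
  have e2 : σ.pull (biprod.inl : C ⟶ C ⊞ (0 : B)) (σ.toPreExtStruct.sumExt δ (0 : σ.Ext (0 : B) Q))
      = σ.push (biprod.inl : A ⟶ A ⊞ Q) δ := by
    rw [sumExt_zero_left, ← σ.toPreExtStruct.push_pull', σ.toPreExtStruct.pull_pull',
      biprod.inl_fst, σ.toPreExtStruct.pull_id']
  rwa [show (⟨biprod.fst, biprod.inl, htot, biprod.inl_fst⟩ : C ⊞ (0 : B) ≅ C).hom = biprod.fst
      from rfl,
    show (⟨biprod.fst, biprod.inl, htot, biprod.inl_fst⟩ : C ⊞ (0 : B) ≅ C).inv = biprod.inl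
      from rfl, e1, e2] at h2

/-- The graph-type split conflation `A ↣ A ⊞ Q ↠ Q` of a morphism `e₀ : A ⟶ Q`. -/
lemma realize_graph {A Q : B} (e₀ : A ⟶ Q) :
    σ.realize (0 : σ.Ext Q A) (biprod.lift (𝟙 A) e₀)
      (biprod.snd - biprod.fst ≫ e₀ : A ⊞ Q ⟶ Q) := by
  have h := σ.realize_zero A Q
  have hTT : (biprod.fst ≫ e₀ ≫ biprod.inr : A ⊞ Q ⟶ A ⊞ Q)
      ≫ (biprod.fst ≫ e₀ ≫ biprod.inr : A ⊞ Q ⟶ A ⊞ Q) = 0 := by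
    rw [Category.assoc, Category.assoc, biprod.inr_fst_assoc, zero_comp, comp_zero, comp_zero]
  have hM1 : (𝟙 (A ⊞ Q) + biprod.fst ≫ e₀ ≫ biprod.inr)
      ≫ (𝟙 (A ⊞ Q) - biprod.fst ≫ e₀ ≫ biprod.inr) = 𝟙 (A ⊞ Q) := by
    simp only [Preadditive.add_comp, Preadditive.comp_sub, Category.id_comp, Category.comp_id,
      hTT]
    abel
  have hM2 : (𝟙 (A ⊞ Q) - biprod.fst ≫ e₀ ≫ biprod.inr)
      ≫ (𝟙 (A ⊞ Q) + biprod.fst ≫ e₀ ≫ biprod.inr) = 𝟙 (A ⊞ Q) := by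
    simp only [Preadditive.sub_comp, Preadditive.comp_add, Category.id_comp, Category.comp_id,
      hTT]
    abel
  have h2 := σ.realize_iso _ _ _
    (⟨𝟙 (A ⊞ Q) + biprod.fst ≫ e₀ ≫ biprod.inr,
      𝟙 (A ⊞ Q) - biprod.fst ≫ e₀ ≫ biprod.inr, hM1, hM2⟩ : A ⊞ Q ≅ A ⊞ Q) h
  have e1 : (biprod.inl : A ⟶ A ⊞ Q) ≫ (𝟙 (A ⊞ Q) + biprod.fst ≫ e₀ ≫ biprod.inr)
      = biprod.lift (𝟙 A) e₀ := by
    rw [biprod.lift_eq, Preadditive.comp_add, Category.comp_id, biprod.inl_fst_assoc,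
      Category.id_comp]
  have e2 : (𝟙 (A ⊞ Q) - biprod.fst ≫ e₀ ≫ biprod.inr) ≫ (biprod.snd : A ⊞ Q ⟶ Q)
      = biprod.snd - biprod.fst ≫ e₀ := by
    rw [Preadditive.sub_comp, Category.id_comp, Category.assoc, Category.assoc, biprod.inr_snd,
      Category.comp_id]
  rwa [show (⟨𝟙 (A ⊞ Q) + biprod.fst ≫ e₀ ≫ biprod.inr,
      𝟙 (A ⊞ Q) - biprod.fst ≫ e₀ ≫ biprod.inr, hM1, hM2⟩ : A ⊞ Q ≅ A ⊞ Q).hom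
      = 𝟙 (A ⊞ Q) + biprod.fst ≫ e₀ ≫ biprod.inr from rfl,
    show (⟨𝟙 (A ⊞ Q) + biprod.fst ≫ e₀ ≫ biprod.inr,
      𝟙 (A ⊞ Q) - biprod.fst ≫ e₀ ≫ biprod.inr, hM1, hM2⟩ : A ⊞ Q ≅ A ⊞ Q).inv
      = 𝟙 (A ⊞ Q) - biprod.fst ≫ e₀ ≫ biprod.inr from rfl, e1, e2] at h2

/-- The cograph-type split conflation `A ↣ Q ⊞ A ↠ Q` of a morphism `τ : A ⟶ Q`. -/
lemma realize_cograph {A Q : B} (τ : A ⟶ Q) :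
    σ.realize (0 : σ.Ext Q A) (biprod.lift τ (𝟙 A))
      (biprod.desc (𝟙 Q) (-τ) : Q ⊞ A ⟶ Q) := by
  have h := σ.realize_zero A Q
  have hM1 : (biprod.desc (biprod.lift τ (𝟙 A)) (biprod.lift (𝟙 Q) 0) : A ⊞ Q ⟶ Q ⊞ A)
      ≫ (biprod.desc (biprod.lift (0 : Q ⟶ A) (𝟙 Q)) (biprod.lift (𝟙 A) (-τ)) : Q ⊞ A ⟶ A ⊞ Q)
      = 𝟙 (A ⊞ Q) := by
    apply biprod.hom_ext' <;> apply biprod.hom_ext <;>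
      simp [biprod.lift_desc, Preadditive.comp_add, Preadditive.add_comp]
  have hM2 : (biprod.desc (biprod.lift (0 : Q ⟶ A) (𝟙 Q)) (biprod.lift (𝟙 A) (-τ)) : Q ⊞ A ⟶ A ⊞ Q)
      ≫ (biprod.desc (biprod.lift τ (𝟙 A)) (biprod.lift (𝟙 Q) 0) : A ⊞ Q ⟶ Q ⊞ A)
      = 𝟙 (Q ⊞ A) := by
    apply biprod.hom_ext' <;> apply biprod.hom_ext <;>
      simp [biprod.lift_desc, Preadditive.comp_add, Preadditive.add_comp]
  have h2 := σ.realize_iso _ _ _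
    (⟨biprod.desc (biprod.lift τ (𝟙 A)) (biprod.lift (𝟙 Q) 0),
      biprod.desc (biprod.lift (0 : Q ⟶ A) (𝟙 Q)) (biprod.lift (𝟙 A) (-τ)), hM1, hM2⟩ : A ⊞ Q ≅ Q ⊞ A) h
  have e1 : (biprod.inl : A ⟶ A ⊞ Q)
      ≫ biprod.desc (biprod.lift τ (𝟙 A)) (biprod.lift (𝟙 Q) 0) = biprod.lift τ (𝟙 A) :=
    biprod.inl_desc _ _
  have e2 : (biprod.desc (biprod.lift (0 : Q ⟶ A) (𝟙 Q)) (biprod.lift (𝟙 A) (-τ)) : Q ⊞ A ⟶ A ⊞ Q)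
      ≫ (biprod.snd : A ⊞ Q ⟶ Q) = biprod.desc (𝟙 Q) (-τ) := by
    apply biprod.hom_ext' <;> simp
  rwa [show (⟨biprod.desc (biprod.lift τ (𝟙 A)) (biprod.lift (𝟙 Q) 0),
      biprod.desc (biprod.lift (0 : Q ⟶ A) (𝟙 Q)) (biprod.lift (𝟙 A) (-τ)), hM1, hM2⟩
        : A ⊞ Q ≅ Q ⊞ A).hom = biprod.desc (biprod.lift τ (𝟙 A)) (biprod.lift (𝟙 Q) 0)
      from rfl,
    show (⟨biprod.desc (biprod.lift τ (𝟙 A)) (biprod.lift (𝟙 Q) 0),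
      biprod.desc (biprod.lift (0 : Q ⟶ A) (𝟙 Q)) (biprod.lift (𝟙 A) (-τ)), hM1, hM2⟩
        : A ⊞ Q ≅ Q ⊞ A).inv = biprod.desc (biprod.lift (0 : Q ⟶ A) (𝟙 Q)) (biprod.lift (𝟙 A) (-τ))
      from rfl, e1, e2] at h2

lemma addClosed_inter (cp : σ.IsCotorsionPair U V) : AddClosed (U ∩ V : Set B) :=
  ⟨fun Z hZ => ⟨cp.addU.zero_mem Z hZ, cp.addV.zero_mem Z hZ⟩,
   fun X Y hX hY => ⟨cp.addU.biprod_mem _ _ hX.1 hY.1, cp.addV.biprod_mem _ _ hX.2 hY.2⟩,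
   fun X Y hY s r hsr => ⟨cp.addU.summand_mem _ _ hY.1 s r hsr,
     cp.addV.summand_mem _ _ hY.2 s r hsr⟩⟩

lemma proj_mem_U (cp : σ.IsCotorsionPair U V) {P : B} (hP : σ.IsProj P) : P ∈ U := by
  obtain ⟨V₁, U₁, f, g, hV, hU, δP, hreal⟩ := cp.resolve P
  rw [hP V₁ δP] at hreal
  obtain ⟨_, s, hs⟩ := σ.split_of_realize_zero hreal
  exact cp.addU.summand_mem P U₁ hU s g hs

lemma mem_sPos_all (cp : σ.IsCotorsionPair U V) (hrigid : U ⊆ V) (X : B) :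
    X ∈ σ.sPos U V := by
  obtain ⟨V₁, U₁, f, g, hV, hU, hc⟩ := cp.resolve X
  exact ⟨V₁, U₁, f, g, hV, ⟨hU, hrigid hU⟩, hc⟩

/-- The cokernel-type construction: given a morphism `e₀ : Y₀ ⟶ Z₀` between objects of `B⁻`,
there is an object `E₀` of the heart together with `d : Z₀ ⟶ E₀` such that `e₀ ≫ d` factors
through `W = U ∩ V`, and a conflation `Y₀ ↣ W' ⊞ Z₀ ↠ E₀`. -/
lemma cokernel_data (cp : σ.IsCotorsionPair U V) (hrigid : U ⊆ V)
    {Y₀ Z₀ : B} (hY : Y₀ ∈ σ.sNeg U V) (hZ : Z₀ ∈ σ.sNeg U V) (e₀ : Y₀ ⟶ Z₀) :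
    ∃ (E₀ : B) (d : Z₀ ⟶ E₀) (W' : B) (_ : W' ∈ U ∩ V) (x : Y₀ ⟶ W')
      (h' : (W' ⊞ Z₀ : B) ⟶ E₀) (δ'' : σ.Ext E₀ Y₀),
      E₀ ∈ σ.sHeartSet U V ∧
      σ.realize δ'' (biprod.lift x e₀) h' ∧
      biprod.inr ≫ h' = d ∧
      e₀ ≫ d ∈ wIdeal (U ∩ V : Set B) Y₀ E₀ := by
  obtain ⟨W_Y, U_Y, xY, yY, hWY, hUY, δY, hδY⟩ := hY
  -- Step 1: compose the graph conflation of `e₀` with the sum conflation via (ET4).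
  have hgraph := σ.realize_graph e₀
  have hsum := σ.realize_sum_id_left hδY Z₀
  obtain ⟨E₀, d, eU, h', δ'', hcomm1, hcomm2, hδ'', hε, hpull1, hpush1⟩ :=
    σ.et4 (0 : σ.Ext Z₀ Y₀) (biprod.lift (𝟙 Y₀) e₀) (biprod.snd - biprod.fst ≫ e₀)
      (σ.push (biprod.inl : Y₀ ⟶ Y₀ ⊞ Z₀) δY) (biprod.map xY (𝟙 Z₀)) (biprod.fst ≫ yY)
      hgraph hsum
  have hfg : biprod.lift (𝟙 Y₀) e₀ ≫ biprod.map xY (𝟙 Z₀) = biprod.lift xY e₀ := by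
    apply biprod.hom_ext <;> simp
  rw [hfg] at hδ''
  -- inr ≫ h' = d :
  have hinr : (biprod.inr : Z₀ ⟶ W_Y ⊞ Z₀) ≫ h' = d := by
    have h1 : (biprod.inr : Z₀ ⟶ Y₀ ⊞ Z₀) ≫ biprod.map xY (𝟙 Z₀) ≫ h'
        = (biprod.inr : Z₀ ⟶ Y₀ ⊞ Z₀) ≫ (biprod.snd - biprod.fst ≫ e₀) ≫ d := by
      rw [hcomm1]
    simpa [Preadditive.sub_comp, Preadditive.comp_sub] using h1
  -- e₀ ≫ d factors through W_Y :
  have hinl : (-xY) ≫ (biprod.inl ≫ h') = e₀ ≫ d := by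
    have h1 : (biprod.inl : Y₀ ⟶ Y₀ ⊞ Z₀) ≫ biprod.map xY (𝟙 Z₀) ≫ h'
        = (biprod.inl : Y₀ ⟶ Y₀ ⊞ Z₀) ≫ (biprod.snd - biprod.fst ≫ e₀) ≫ d := by
      rw [hcomm1]
    simp only [biprod.inl_map_assoc, Preadditive.sub_comp, Preadditive.comp_sub,
      biprod.inl_snd_assoc, biprod.inl_fst_assoc, zero_comp, Category.assoc] at h1
    -- h1 : xY ≫ biprod.inl ≫ h' = 0 - e₀ ≫ d
    rw [Preadditive.neg_comp, h1]
    abel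
  -- Step 2: E₀ lies in `B⁻`.
  obtain ⟨W_Z, U_Z, xZ, yZ, hWZ, hUZ, δZ, hδZ⟩ := hZ
  have hv : σ.push xZ (σ.push (biprod.snd - biprod.fst ≫ e₀)
      (σ.push (biprod.inl : Y₀ ⟶ Y₀ ⊞ Z₀) δY)) = 0 :=
    cp.ext_vanish hUY hWZ.2 _
  obtain ⟨h, hh⟩ := σ.extend_of_push_zero hε xZ hv
  obtain ⟨τ, hτ1, hτ2⟩ := σ.et3 (σ.push (biprod.snd - biprod.fst ≫ e₀)
      (σ.push (biprod.inl : Y₀ ⟶ Y₀ ⊞ Z₀) δY)) δZ d eU xZ yZ hε hδZ (𝟙 Z₀) h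
    (by rw [hh, Category.id_comp])
  rw [σ.toPreExtStruct.push_id'] at hτ1
  have hsum2 := σ.realize_sum_id_right hδZ U_Y
  have hcog := σ.realize_cograph τ
  obtain ⟨E₁, e₁, d₁, m, δ₂, hc1, hc2, hδ₂, hpb, hp2, hp3⟩ :=
    σ.et4op (σ.pull (biprod.fst : U_Z ⊞ U_Y ⟶ U_Z) δZ) (xZ ≫ biprod.inl)
      (biprod.map yZ (𝟙 U_Y)) (0 : σ.Ext U_Z U_Y) (biprod.lift τ (𝟙 U_Y))
      (biprod.desc (𝟙 U_Z) (-τ)) hsum2 hcog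
  have hpba : σ.pull (biprod.lift τ (𝟙 U_Y)) (σ.pull (biprod.fst : U_Z ⊞ U_Y ⟶ U_Z) δZ)
      = σ.push (biprod.snd - biprod.fst ≫ e₀) (σ.push (biprod.inl : Y₀ ⟶ Y₀ ⊞ Z₀) δY) := by
    rw [σ.toPreExtStruct.pull_pull', biprod.lift_fst, ← hτ1]
  rw [hpba] at hpb
  obtain ⟨c₂, hc₂1, hc₂2⟩ := σ.realize_unique _ d eU e₁ d₁ hε hpb
  have hconf := σ.realize_iso_left hδ₂ c₂.symm
  have hE₀neg : E₀ ∈ σ.sNeg U V :=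
    ⟨W_Z ⊞ U_Y, U_Z, c₂.symm.inv ≫ m,
      biprod.map yZ (𝟙 U_Y) ≫ biprod.desc (𝟙 U_Z) (-τ),
      ⟨cp.addU.biprod_mem _ _ hWZ.1 hUY, cp.addV.biprod_mem _ _ hWZ.2 (hrigid hUY)⟩,
      hUZ, ⟨σ.push c₂.symm.hom δ₂, hconf⟩⟩
  refine ⟨E₀, d, W_Y, hWY, xY, h', δ'', ⟨σ.mem_sPos_all cp hrigid E₀, hE₀neg⟩, hδ'', hinr, ?_⟩
  rw [← hinl]
  exact mem_wIdeal_of_factor hWY (-xY) (biprod.inl ≫ h')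

end ExtStruct
end Aux16

/-- Corollary 4.13 / `CorHCoH`. If `B` is an extriangulated category with
enough projectives and `(U,V)` is a rigid cotorsion pair (`U ⊆ V`), then the heart of
`(U,V)` has enough projectives: every object admits an epimorphism from a projective
object of the heart. -/
theorem statement_16 {B : Type u} [Category.{v} B] [Preadditive B] [HasFiniteBiproducts B]
    (σ : ExtStruct B) {U V : Set B} (cp : σ.IsCotorsionPair U V)
    (hrigid : U ⊆ V) (hproj : σ.EnoughProj) :
    ∀ X : σ.SHeart U V, ∃ (P : σ.SHeart U V) (f : P ⟶ X), Projective P ∧ Epi f := by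
  intro X
  have hWclosed : AddClosed (U ∩ V : Set B) := σ.addClosed_inter cp
  obtain ⟨W₀, U₀, x₀, y₀, hW₀, hU₀, δ, hδ⟩ := X.property.2
  obtain ⟨P, K, i, p, hPproj, θ, hθ⟩ := hproj U₀
  have hPW : P ∈ U ∩ V := ⟨σ.proj_mem_U cp hPproj, hrigid (σ.proj_mem_U cp hPproj)⟩
  obtain ⟨b'', hb''⟩ := σ.factor_of_pull_zero hδ p (hPproj _ _)
  obtain ⟨g, hg1, hg2⟩ := σ.et3op θ δ i p x₀ y₀ hθ hδ b'' (𝟙 U₀)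
    (by rw [hb'', Category.comp_id])
  rw [σ.toPreExtStruct.pull_id'] at hg1
  have hK : K ∈ σ.sHeartSet U V :=
    ⟨σ.mem_sPos_all cp hrigid K, ⟨P, U₀, i, p, hPW, hU₀, θ, hθ⟩⟩
  refine ⟨⟨(toQuot (U ∩ V : Set B)).obj K, hK⟩, ObjectProperty.homMk ((toQuot (U ∩ V : Set B)).map g), ?_, ?_⟩
  · -- Projectivity of the syzygy object in the heart.
    constructor
    intro 𝓔 𝓩 φh eh he
    haveI := he
    let eq' : (toQuot (U ∩ V : Set B)).obj 𝓔.obj.as ⟶ (toQuot (U ∩ V : Set B)).obj 𝓩.obj.as := eh.hom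
    let φq' : (toQuot (U ∩ V : Set B)).obj K ⟶ (toQuot (U ∩ V : Set B)).obj 𝓩.obj.as := φh.hom
    obtain ⟨e₀, he₀⟩ := (toQuot (U ∩ V : Set B)).map_surjective eq'
    obtain ⟨φ, hφ⟩ := (toQuot (U ∩ V : Set B)).map_surjective φq'
    obtain ⟨E₀, d, W', hW', x, h', δ'', hE₀, hδ'', hinr, hfac⟩ :=
      σ.cokernel_data cp hrigid 𝓔.property.2 𝓩.property.2 e₀
    let T : σ.SHeart U V := ⟨(toQuot (U ∩ V : Set B)).obj E₀, hE₀⟩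
    let dh : 𝓩 ⟶ T := ObjectProperty.homMk ((toQuot (U ∩ V : Set B)).map d)
    let zh : 𝓩 ⟶ T := ObjectProperty.homMk (0 : (toQuot (U ∩ V : Set B)).obj 𝓩.obj.as ⟶ (toQuot (U ∩ V : Set B)).obj E₀)
    have hq : eq' ≫ (toQuot (U ∩ V : Set B)).map d
        = eq' ≫ (0 : (toQuot (U ∩ V : Set B)).obj 𝓩.obj.as ⟶ (toQuot (U ∩ V : Set B)).obj E₀) := by
      rw [comp_zero, ← he₀, ← Functor.map_comp, toQuot_map_eq_zero_iff]
      exact hfac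
    have hzero : eh ≫ dh = eh ≫ zh := ObjectProperty.hom_ext _ hq
    have hdh : dh = zh := (cancel_epi eh).mp hzero
    have hd1 : d ∈ wIdeal (U ∩ V : Set B) 𝓩.obj.as E₀ := by
      rw [← toQuot_map_eq_zero_iff (U ∩ V : Set B) d]
      exact congrArg (fun t => t.hom) hdh
    rw [mem_wIdeal_iff hWclosed] at hd1
    obtain ⟨Z', hZ', s', r', hd_factor⟩ := hd1
    obtain ⟨σ₁, hσ₁⟩ := σ.extend_of_push_zero hθ (φ ≫ s') (cp.ext_vanish hU₀ hZ'.2 _)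
    obtain ⟨ρ', hρ'⟩ := σ.factor_of_pull_zero hδ'' (σ₁ ≫ r') (hPproj _ _)
    have ht' : (φ ≫ biprod.inr - i ≫ ρ') ≫ h' = 0 := by
      rw [Preadditive.sub_comp, Category.assoc, Category.assoc, hinr, hρ', ← Category.assoc,
        hσ₁, Category.assoc, ← hd_factor, sub_self]
    obtain ⟨ψ, hψ⟩ := σ.weak_kernel hδ'' _ ht'
    have key : ψ ≫ e₀ - φ = (-i) ≫ (ρ' ≫ biprod.snd) := by
      have h1 := congrArg
        (fun (t : K ⟶ (W' ⊞ 𝓩.obj.as : B)) =>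
          t ≫ (biprod.snd : (W' ⊞ 𝓩.obj.as : B) ⟶ 𝓩.obj.as))
        hψ
      simp only [Category.assoc, biprod.lift_snd, Preadditive.sub_comp, biprod.inr_snd,
        Category.comp_id] at h1
      rw [h1, Preadditive.neg_comp]
      abel
    have hfin : (toQuot (U ∩ V : Set B)).map ψ ≫ eq' = φq' := by
      rw [← he₀, ← hφ, ← Functor.map_comp, toQuot_map_eq_iff, key]
      exact mem_wIdeal_of_factor hPW (-i) (ρ' ≫ biprod.snd)
    exact ⟨ObjectProperty.homMk ((toQuot (U ∩ V : Set B)).map ψ), ObjectProperty.hom_ext _ hfin⟩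
  · -- The induced morphism is epi in the heart.
    constructor
    intro T u v huv
    let u' : (toQuot (U ∩ V : Set B)).obj X.obj.as ⟶ (toQuot (U ∩ V : Set B)).obj T.obj.as := u.hom
    let v' : (toQuot (U ∩ V : Set B)).obj X.obj.as ⟶ (toQuot (U ∩ V : Set B)).obj T.obj.as := v.hom
    have huv' : (toQuot (U ∩ V : Set B)).map g ≫ u' = (toQuot (U ∩ V : Set B)).map g ≫ v' := congrArg (fun t => t.hom) huv
    obtain ⟨w, hw⟩ := (toQuot (U ∩ V : Set B)).map_surjective (u' - v')
    have h0 : (toQuot (U ∩ V : Set B)).map (g ≫ w) = 0 := by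
      rw [Functor.map_comp, hw, Preadditive.comp_sub, huv', sub_self]
    rw [toQuot_map_eq_zero_iff, mem_wIdeal_iff hWclosed] at h0
    obtain ⟨Z', hZ', s, r, hgw⟩ := h0
    have hwδ : σ.push w δ = 0 := by
      rw [← hg1, σ.toPreExtStruct.push_push', hgw, ← σ.toPreExtStruct.push_push',
        cp.ext_vanish hU₀ hZ'.2 (σ.push s θ), σ.toPreExtStruct.push_zero']
    obtain ⟨h₁, hh₁⟩ := σ.extend_of_push_zero hδ w hwδ
    have hsub : u' - v' = 0 := by
      rw [← hw, toQuot_map_eq_zero_iff, mem_wIdeal_iff hWclosed]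
      exact ⟨W₀, hW₀, x₀, h₁, hh₁.symm⟩
    exact ObjectProperty.hom_ext _ (sub_eq_zero.mp hsub)

end ExtriHearts
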